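/- arXiv:1008.5143 — 5 statements merged into one kernel-verified Lean document; each statement's English description precedes it below -/
import Mathlib

section
/- Let α, c ∈ [0,1] and let φ : [0,1] → ℝ be continuous, monotone increasing, convex on [0,c] and concave on [c,1]. Then there exists t ∈ [max(α,c), 1] such that the probability measure P_t := (1 - α/t) δ_0 + (α/t) δ_t (where α/t := 0 in case t = 0, which can occur only if α = 0) satisfies ∫ φ dP_t ≥ ∫ φ dQ for every Borel probability measure Q on [0,1] with mean ∫ s dQ(s) ≤ α. In particular, the supremum of ∫ φ dQ over all Borel probability measures Q on [0,1] with mean at most α is attained by a measure of the form (1 - α/t) δ_0 + (α/t) δ_t with t ∈ [max(α,c), 1]. -/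
open MeasureTheory

private lemma integrable_dirac'' (φ : ℝ → ℝ) (x : ℝ) : Integrable φ (Measure.dirac x) := by
  have h : φ =ᵐ[Measure.dirac x] fun _ => φ x := by
    rw [Filter.EventuallyEq, ae_dirac_eq]
    exact Filter.eventually_pure.mpr rfl
  exact (integrable_const (φ x)).congr h.symm

private lemma integral_twoPoint (φ : ℝ → ℝ) (α t : ℝ) (h0 : 0 ≤ α / t) (h1 : α / t ≤ 1) :
    ∫ s, φ s ∂(ENNReal.ofReal (1 - α / t) • Measure.dirac (0:ℝ)
      + ENNReal.ofReal (α / t) • Measure.dirac t)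
    = (1 - α / t) * φ 0 + (α / t) * φ t := by
  rw [integral_add_measure ((integrable_dirac'' φ 0).smul_measure ENNReal.ofReal_ne_top)
      ((integrable_dirac'' φ t).smul_measure ENNReal.ofReal_ne_top),
    integral_smul_measure, integral_smul_measure, integral_dirac, integral_dirac,
    ENNReal.toReal_ofReal (by linarith), ENNReal.toReal_ofReal h0, smul_eq_mul, smul_eq_mul]

private lemma key_line (α t a b : ℝ) (hα0 : 0 ≤ α) (ht : 0 < t) (hαt : α ≤ t) (ht1 : t ≤ 1)
    (φ : ℝ → ℝ) (hcont : ContinuousOn φ (Set.Icc 0 1)) (hb : 0 ≤ b)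
    (maj : ∀ s ∈ Set.Icc (0:ℝ) 1, φ s ≤ a + b * s)
    (hval : a + b * α ≤ (1 - α / t) * φ 0 + (α / t) * φ t) :
    ∀ Q : Measure ℝ, IsProbabilityMeasure Q → Q (Set.Icc 0 1) = 1 →
      (∫ s, s ∂Q) ≤ α →
      ∫ s, φ s ∂Q ≤
        ∫ s, φ s ∂(ENNReal.ofReal (1 - α / t) • Measure.dirac (0:ℝ)
          + ENNReal.ofReal (α / t) • Measure.dirac t) := by
  intro Q hQP hQ1 hmean
  rw [integral_twoPoint φ α t (div_nonneg hα0 ht.le) ((div_le_one ht).mpr hαt)]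
  have hQc : Q (Set.Icc (0:ℝ) 1)ᶜ = 0 := by
    rw [measure_compl measurableSet_Icc (measure_ne_top Q _), hQ1, measure_univ, tsub_self]
  have hQae : ∀ᵐ s ∂Q, s ∈ Set.Icc (0:ℝ) 1 := by
    rw [ae_iff]; exact hQc
  set ψ : ℝ → ℝ := fun s => φ (max 0 (min 1 s)) with hψ
  have hproj : ∀ s : ℝ, max 0 (min 1 s) ∈ Set.Icc (0:ℝ) 1 :=
    fun s => ⟨le_max_left _ _, max_le zero_le_one (min_le_left _ _)⟩
  have hψc : Continuous ψ := hcont.comp_continuous (continuous_const.max (continuous_const.min continuous_id)) hproj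
  obtain ⟨C, hC⟩ := isCompact_Icc.exists_bound_of_continuousOn hcont
  have hψint : Integrable ψ Q :=
    Integrable.mono' (integrable_const C) hψc.aestronglyMeasurable
      (Filter.Eventually.of_forall fun s => hC _ (hproj s))
  have hφψ : φ =ᵐ[Q] ψ := hQae.mono fun s hs => by
    simp [hψ, min_eq_right hs.2, max_eq_right hs.1]
  have hφint : Integrable φ Q := hψint.congr hφψ.symm
  have hidint : Integrable (fun s : ℝ => s) Q :=
    Integrable.mono' (integrable_const 1) aestronglyMeasurable_id
      (hQae.mono fun s hs => by rw [Real.norm_eq_abs, abs_of_nonneg hs.1]; exact hs.2)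
  have hlineint : Integrable (fun s : ℝ => a + b * s) Q :=
    (integrable_const a).add (hidint.const_mul b)
  have h1 : ∫ s, φ s ∂Q ≤ ∫ s, a + b * s ∂Q :=
    integral_mono_ae hφint hlineint (hQae.mono fun s hs => maj s hs)
  have h2 : ∫ s, (a + b * s) ∂Q = a + b * ∫ s, s ∂Q := by
    rw [integral_add (integrable_const a) (hidint.const_mul b), integral_const,
      integral_const_mul, probReal_univ]
    simp
  have h3 : b * ∫ s, s ∂Q ≤ b * α := mul_le_mul_of_nonneg_left hmean hb
  rw [h2] at h1
  linarith

/-- For `φ : [0,1] → ℝ` continuous, increasing, convex on `[0,c]` and concave on `[c,1]`,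
the maximum of `∫ φ dQ` over probability measures `Q` on `[0,1]` with mean at most `α`
is attained by a two-point measure `(1 - α/t) δ₀ + (α/t) δ_t` with `t ∈ [max(α,c), 1]`. -/
theorem argmax_two_point (α c : ℝ) (hα : α ∈ Set.Icc (0:ℝ) 1) (hc : c ∈ Set.Icc (0:ℝ) 1)
    (φ : ℝ → ℝ) (hcont : ContinuousOn φ (Set.Icc 0 1))
    (hmono : MonotoneOn φ (Set.Icc 0 1))
    (hconv : ConvexOn ℝ (Set.Icc 0 c) φ) (hconc : ConcaveOn ℝ (Set.Icc c 1) φ) :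
    ∃ t ∈ Set.Icc (max α c) 1,
      ∀ Q : Measure ℝ, IsProbabilityMeasure Q → Q (Set.Icc 0 1) = 1 →
        (∫ s, s ∂Q) ≤ α →
        ∫ s, φ s ∂Q ≤
          ∫ s, φ s ∂(ENNReal.ofReal (1 - α / t) • Measure.dirac (0:ℝ)
            + ENNReal.ofReal (α / t) • Measure.dirac t) := by
  obtain ⟨hα0, hα1⟩ := hα
  obtain ⟨hc0, hc1⟩ := hc
  have hmax1 : max α c ≤ 1 := max_le hα1 hc1
  rcases eq_or_lt_of_le hα0 with hα0' | hαpos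
  · -- α = 0 case
    subst hα0'
    refine ⟨1, ⟨hmax1, le_refl 1⟩, ?_⟩
    intro Q hQP hQ1 hmean
    rw [integral_twoPoint φ 0 1 (by norm_num) (by norm_num)]
    have hQc : Q (Set.Icc (0:ℝ) 1)ᶜ = 0 := by
      rw [measure_compl measurableSet_Icc (measure_ne_top Q _), hQ1, measure_univ, tsub_self]
    have hQae : ∀ᵐ s ∂Q, s ∈ Set.Icc (0:ℝ) 1 := by
      rw [ae_iff]; exact hQc
    have hidint : Integrable (fun s : ℝ => s) Q :=
      Integrable.mono' (integrable_const 1) aestronglyMeasurable_id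
        (hQae.mono fun s hs => by rw [Real.norm_eq_abs, abs_of_nonneg hs.1]; exact hs.2)
    have hnn : 0 ≤ᵐ[Q] fun s : ℝ => s := hQae.mono fun s hs => hs.1
    have hz : ∫ s, s ∂Q = 0 := le_antisymm hmean (integral_nonneg_of_ae hnn)
    have h0ae : (fun s : ℝ => s) =ᵐ[Q] 0 :=
      (integral_eq_zero_iff_of_nonneg_ae hnn hidint).mp hz
    have hφ0 : φ =ᵐ[Q] fun _ => φ 0 := h0ae.mono fun s hs => by
      simp only [Pi.zero_apply] at hs
      rw [hs]
    rw [integral_congr_ae hφ0, integral_const, probReal_univ]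
    norm_num
  · -- 0 < α
    by_cases hα1' : α = 1
    · subst hα1'
      refine ⟨1, ⟨hmax1, le_refl 1⟩,
        key_line 1 1 (φ 1) 0 zero_le_one one_pos le_rfl le_rfl φ hcont le_rfl ?_ (by norm_num)⟩
      intro s hs
      simpa using hmono hs ⟨zero_le_one, le_rfl⟩ hs.2
    have hα1'' : α < 1 := lt_of_le_of_ne hα1 hα1'
    set σ : ℝ → ℝ := fun s => (φ s - φ 0) / s with hσdef
    have hSsub : Set.Icc (max α c) 1 ⊆ Set.Icc (0:ℝ) 1 :=
      Set.Icc_subset_Icc (le_trans hα0 (le_max_left α c)) le_rfl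
    have hSne : (Set.Icc (max α c) 1).Nonempty := Set.nonempty_Icc.mpr hmax1
    have hσcont : ContinuousOn σ (Set.Icc (max α c) 1) :=
      ((hcont.mono hSsub).sub continuousOn_const).div continuousOn_id
        (fun s hs => ne_of_gt (lt_of_lt_of_le hαpos (le_trans (le_max_left α c) hs.1)))
    obtain ⟨t, htS, htmax⟩ := isCompact_Icc.exists_isMaxOn hSne hσcont
    have htmax' : ∀ s ∈ Set.Icc (max α c) 1, σ s ≤ σ t := htmax
    have hαt : α ≤ t := le_trans (le_max_left α c) htS.1
    have ht0 : 0 < t := lt_of_lt_of_le hαpos hαt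
    have hσ10 : (0:ℝ) ≤ σ 1 := by
      have := hmono ⟨le_rfl, zero_le_one⟩ ⟨zero_le_one, le_rfl⟩ zero_le_one
      simp only [hσdef, div_one]
      linarith
    have hσt0 : 0 ≤ σ t := le_trans hσ10 (htmax' 1 ⟨hmax1, le_rfl⟩)
    have hconvc : ∀ s, 0 < s → s ≤ c → σ s ≤ σ c := by
      intro s hs hsc
      have hc0' : 0 < c := lt_of_lt_of_le hs hsc
      have hθ0 : (0:ℝ) ≤ s / c := by positivity
      have hθ1 : s / c ≤ 1 := by rw [div_le_one hc0']; exact hsc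
      have hkey := hconv.2 (⟨le_rfl, hc0⟩ : (0:ℝ) ∈ Set.Icc 0 c)
        (⟨hc0, le_rfl⟩ : c ∈ Set.Icc 0 c) (by linarith : (0:ℝ) ≤ 1 - s / c) hθ0 (by ring)
      simp only [smul_eq_mul, mul_zero, zero_add] at hkey
      rw [div_mul_cancel₀ _ (ne_of_gt hc0')] at hkey
      have hkey2 : c * φ s ≤ (c - s) * φ 0 + s * φ c := by
        calc c * φ s ≤ c * ((1 - s / c) * φ 0 + s / c * φ c) :=
              mul_le_mul_of_nonneg_left hkey hc0'.le
          _ = (c - s) * φ 0 + s * φ c := by field_simp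
      simp only [hσdef]
      rw [div_le_div_iff₀ hs hc0']
      nlinarith [hkey2]
    by_cases hI : ∀ s ∈ Set.Ioc (0:ℝ) 1, σ s ≤ σ t
    · -- Case I: chord from 0 to t dominates everywhere
      refine ⟨t, htS, key_line α t (φ 0) (σ t) hα0 ht0 hαt htS.2 φ hcont hσt0 ?_ ?_⟩
      · intro s hs
        rcases eq_or_lt_of_le hs.1 with h | h
        · rw [← h]; simp
        · have h2 : (φ s - φ 0) / s ≤ σ t := hI s ⟨h, hs.2⟩
          rw [div_le_iff₀ h] at h2
          linarith
      · refine le_of_eq ?_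
        have hσt : σ t = (φ t - φ 0) / t := rfl
        rw [hσt]
        field_simp
        ring
    · -- Case II: best slope is attained left of α; use t = α
      push_neg at hI
      obtain ⟨s0, hs0, hσs0⟩ := hI
      have hcα : c < α := by
        by_contra h
        push_neg at h
        have hmaxc : max α c = c := max_eq_right h
        have h1 : σ c ≤ σ t := htmax' c ⟨hmaxc.le, hc1⟩
        rcases le_or_gt s0 c with h2 | h2
        · exact absurd ((hconvc s0 hs0.1 h2).trans h1) (not_le.mpr hσs0)
        · exact absurd (htmax' s0 ⟨by rw [hmaxc]; exact h2.le, hs0.2⟩) (not_le.mpr hσs0)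
      have hmaxα : max α c = α := max_eq_left hcα.le
      have hσα : σ α ≤ σ t := htmax' α ⟨hmaxα.le, hα1⟩
      obtain ⟨s1, hs1c, hs1pos, hs1α, hσs1⟩ :
          ∃ s1, c ≤ s1 ∧ 0 < s1 ∧ s1 < α ∧ σ t < σ s1 := by
        rcases le_or_gt s0 c with h2 | h2
        · exact ⟨c, le_rfl, lt_of_lt_of_le hs0.1 h2, hcα,
            lt_of_lt_of_le hσs0 (hconvc s0 hs0.1 h2)⟩
        · refine ⟨s0, h2.le, hs0.1, ?_, hσs0⟩
          by_contra h3
          push_neg at h3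
          exact absurd (htmax' s0 ⟨by rw [hmaxα]; exact h3, hs0.2⟩) (not_le.mpr hσs0)
      set lam := σ α with hlamdef
      have hlam_mul : lam * α = φ α - φ 0 := div_mul_cancel₀ _ (ne_of_gt hαpos)
      have hs1lam : lam * s1 < φ s1 - φ 0 := by
        have h : lam < (φ s1 - φ 0) / s1 := lt_of_le_of_lt hσα hσs1
        rwa [lt_div_iff₀ hs1pos] at h
      have hs1mem : s1 ∈ Set.Icc c 1 := ⟨hs1c, le_trans hs1α.le hα1⟩
      have hαmem : α ∈ Set.Icc c 1 := ⟨hcα.le, hα1⟩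
      have hchordR : ∀ w ∈ Set.Ioc α 1, (φ w - φ α) / (w - α) ≤ lam := by
        intro w hw
        have hwmem : w ∈ Set.Icc c 1 := ⟨le_trans hcα.le hw.1.le, hw.2⟩
        have hslope := hconc.slope_anti_adjacent hs1mem hwmem hs1α hw.1
        have h2 : (φ α - φ s1) / (α - s1) ≤ lam := by
          rw [div_le_iff₀ (by linarith : (0:ℝ) < α - s1)]
          nlinarith [hlam_mul, hs1lam]
        exact hslope.trans h2
      set Msl := sSup ((fun w => (φ w - φ α) / (w - α)) '' Set.Ioc α 1) with hMdef
      have hne : ((fun w => (φ w - φ α) / (w - α)) '' Set.Ioc α 1).Nonempty :=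
        ⟨_, Set.mem_image_of_mem _ (⟨hα1'', le_rfl⟩ : (1:ℝ) ∈ Set.Ioc α 1)⟩
      have hbdd : BddAbove ((fun w => (φ w - φ α) / (w - α)) '' Set.Ioc α 1) := by
        refine ⟨lam, ?_⟩
        rintro x ⟨w, hw, rfl⟩
        exact hchordR w hw
      have hMlam : Msl ≤ lam := by
        refine csSup_le hne ?_
        rintro x ⟨w, hw, rfl⟩
        exact hchordR w hw
      have hMge : ∀ w ∈ Set.Ioc α 1, (φ w - φ α) / (w - α) ≤ Msl :=
        fun w hw => le_csSup hbdd (Set.mem_image_of_mem _ hw)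
      have hM0 : 0 ≤ Msl := by
        have h1 : (0:ℝ) ≤ (φ 1 - φ α) / (1 - α) :=
          div_nonneg (sub_nonneg.mpr (hmono ⟨hα0, hα1⟩ ⟨zero_le_one, le_rfl⟩ hα1))
            (by linarith)
        exact h1.trans (hMge 1 ⟨hα1'', le_rfl⟩)
      have hMchordL : ∀ s ∈ Set.Ico c α, Msl ≤ (φ α - φ s) / (α - s) := by
        intro s hs
        refine csSup_le hne ?_
        rintro x ⟨w, hw, rfl⟩
        exact hconc.slope_anti_adjacent ⟨hs.1, le_trans hs.2.le hα1⟩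
          ⟨le_trans hcα.le hw.1.le, hw.2⟩ hs.2 hw.1
      have maj : ∀ s ∈ Set.Icc (0:ℝ) 1, φ s ≤ (φ α - Msl * α) + Msl * s := by
        intro s hs
        rcases lt_trichotomy s α with hsα | hsα | hsα
        · rcases lt_or_ge s c with hsc | hsc
          · -- convex part, 0 ≤ s < c
            have hc0' : 0 < c := lt_of_le_of_lt hs.1 hsc
            have hL0 : φ 0 ≤ φ α - Msl * α := by
              have := mul_le_mul_of_nonneg_right hMlam hα0
              linarith [hlam_mul]
            have hLc : φ c ≤ (φ α - Msl * α) + Msl * c := by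
              have h2 := hMchordL c ⟨le_rfl, hcα⟩
              rw [le_div_iff₀ (by linarith : (0:ℝ) < α - c)] at h2
              linarith
            have hθ0 : (0:ℝ) ≤ s / c := div_nonneg hs.1 hc0'.le
            have hθ1 : s / c ≤ 1 := by rw [div_le_one hc0']; exact hsc.le
            have hkey := hconv.2 (⟨le_rfl, hc0⟩ : (0:ℝ) ∈ Set.Icc 0 c)
              (⟨hc0, le_rfl⟩ : c ∈ Set.Icc 0 c) (by linarith : (0:ℝ) ≤ 1 - s / c) hθ0
              (by ring)
            simp only [smul_eq_mul, mul_zero, zero_add] at hkey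
            rw [div_mul_cancel₀ _ (ne_of_gt hc0')] at hkey
            have hsceq : s / c * c = s := div_mul_cancel₀ _ (ne_of_gt hc0')
            nlinarith [hkey, hL0, hLc, hθ0, hθ1, hsceq]
          · -- concave part left of α
            have h2 := hMchordL s ⟨hsc, hsα⟩
            rw [le_div_iff₀ (by linarith : (0:ℝ) < α - s)] at h2
            linarith
        · rw [hsα]; linarith
        · have h2 := hMge s ⟨hsα, hs.2⟩
          rw [div_le_iff₀ (by linarith : (0:ℝ) < s - α)] at h2
          linarith
      refine ⟨α, ⟨hmaxα.le, hα1⟩,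
        key_line α α (φ α - Msl * α) Msl hα0 hαpos le_rfl hα1 φ hcont hM0 maj ?_⟩
      rw [div_self (ne_of_gt hαpos)]
      norm_num
end

section
/- Let n ∈ ℕ, 1 ≤ k ≤ n and α ∈ [0,1]. Then the supremum of ∫_{[0,1]} B_{n,t}({k,…,n}) dP(t) over all Borel probability measures P on [0,1] with mean ∫ t dP(t) ≤ α is attained and equals f_{n,k}(α). -/
open MeasureTheory

/-- Binomial upper tail `B_{n,p}({k,…,n})`. -/
noncomputable def binTail (n k : ℕ) (p : ℝ) : ℝ :=
  ∑ j ∈ Finset.Icc k n, (n.choose j : ℝ) * p ^ j * (1 - p) ^ (n - j)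

/-- `ψ_{n,k}(p) = p⁻¹ B_{n,p}({k,…,n})`, extended continuously at `0`. -/
noncomputable def psi (n k : ℕ) (p : ℝ) : ℝ :=
  if p = 0 then (if k = 1 then (n : ℝ) else 0) else p⁻¹ * binTail n k p

noncomputable def Qp (n k : ℕ) (p : ℝ) : ℝ :=
  ∑ j ∈ Finset.Icc k n, (n.choose j : ℝ) * p ^ (j - 1) * (1 - p) ^ (n - j)

lemma binTail_eq_mul (n k : ℕ) (hk1 : 1 ≤ k) (p : ℝ) :
    binTail n k p = p * Qp n k p := by
  unfold binTail Qp
  rw [Finset.mul_sum]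
  refine Finset.sum_congr rfl fun j hj => ?_
  obtain ⟨i, rfl⟩ := Nat.exists_eq_add_of_le (le_trans hk1 (Finset.mem_Icc.mp hj).1)
  simp only [Nat.add_sub_cancel_left]
  ring

lemma Qp_nonneg (n k : ℕ) {p : ℝ} (hp : p ∈ Set.Icc (0:ℝ) 1) : 0 ≤ Qp n k p := by
  refine Finset.sum_nonneg fun j hj => ?_
  have h0 := hp.1
  have h1 : (0:ℝ) ≤ 1 - p := by linarith [hp.2]
  have := pow_nonneg h0 (j-1)
  have := pow_nonneg h1 (n-j)
  have : (0:ℝ) ≤ (n.choose j : ℝ) := by positivity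
  apply mul_nonneg (mul_nonneg this (pow_nonneg h0 _)) (pow_nonneg h1 _)

lemma Qp_continuous (n k : ℕ) : Continuous (Qp n k) := by
  unfold Qp
  exact continuous_finset_sum _ fun j _ => by continuity

lemma binTail_zero (n k : ℕ) (hk1 : 1 ≤ k) : binTail n k 0 = 0 := by
  rw [binTail_eq_mul n k hk1]; ring

lemma psi_eq_Qp (n k : ℕ) (hk1 : 1 ≤ k) (hkn : k ≤ n) (p : ℝ) :
    psi n k p = Qp n k p := by
  unfold psi
  split_ifs with h hk
  · subst h hk
    rw [Qp, Finset.sum_eq_single 1]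
    · norm_num
    · intro j hj hj1
      obtain ⟨i, rfl⟩ := Nat.exists_eq_add_of_le (Finset.mem_Icc.mp hj).1
      have hi : i ≠ 0 := by rintro rfl; simp at hj1
      simp [Nat.add_sub_cancel_left, zero_pow hi]
    · intro h1
      exact absurd (Finset.mem_Icc.mpr ⟨le_refl 1, hkn⟩) h1
  · subst h
    rw [Qp, Finset.sum_eq_zero]
    intro j hj
    have hj2 : 2 ≤ j := by
      have := (Finset.mem_Icc.mp hj).1; omega
    have : j - 1 ≠ 0 := by omega
    simp [zero_pow this]
  · rw [binTail_eq_mul n k hk1, ← mul_assoc, inv_mul_cancel₀ h, one_mul]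

noncomputable def gfun (n k : ℕ) (x : ℝ) : ℝ := x ^ (k - 1) * (1 - x) ^ (n - k)

noncomputable def cst (n k : ℕ) : ℝ := k * n.choose k

lemma cst_nonneg (n k : ℕ) : 0 ≤ cst n k := by unfold cst; positivity

lemma gfun_nonneg (n k : ℕ) {x : ℝ} (hx : x ∈ Set.Icc (0:ℝ) 1) : 0 ≤ gfun n k x := by
  have h1 : (0:ℝ) ≤ 1 - x := by linarith [hx.2]
  exact mul_nonneg (pow_nonneg hx.1 _) (pow_nonneg h1 _)

lemma gfun_continuous (n k : ℕ) : Continuous (gfun n k) := by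
  unfold gfun; continuity

lemma hasDerivAt_binTail (n k : ℕ) (hk1 : 1 ≤ k) (hkn : k ≤ n) (p : ℝ) :
    HasDerivAt (binTail n k) (cst n k * gfun n k p) p := by
  have key : ∀ j ∈ Finset.Icc k n,
      HasDerivAt (fun q : ℝ => (n.choose j : ℝ) * q ^ j * (1 - q) ^ (n - j))
        ((j * n.choose j : ℝ) * p ^ (j-1) * (1-p) ^ (n-j)
          - ((j+1) * n.choose (j+1) : ℝ) * p ^ j * (1-p) ^ (n-(j+1))) p := by
    intro j hj
    obtain ⟨hjk, hjn⟩ := Finset.mem_Icc.mp hj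
    have h1 : HasDerivAt (fun q : ℝ => q ^ j) (j * p ^ (j-1)) p := by
      simpa using hasDerivAt_pow j p
    have h2 : HasDerivAt (fun q : ℝ => (1 - q) ^ (n - j))
        ((n - j : ℕ) * (1 - p) ^ (n - j - 1) * (-1)) p := by
      exact (((hasDerivAt_id p).const_sub 1).pow (n-j))
    have h3 := (h1.const_mul (n.choose j : ℝ)).mul h2
    refine h3.congr_deriv ?_
    have hc : ((j+1) * n.choose (j+1) : ℝ) = ((n - j : ℕ) : ℝ) * (n.choose j : ℝ) := by
      have hnat : (j+1) * n.choose (j+1) = (n-j) * n.choose j := by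
        rw [mul_comm, Nat.choose_succ_right_eq, mul_comm]
      exact_mod_cast congrArg (Nat.cast : ℕ → ℝ) hnat
    have he : n - (j+1) = n - j - 1 := by omega
    rw [hc, he]
    ring
  have hsum := HasDerivAt.fun_sum key
  have hTel : (∑ j ∈ Finset.Icc k n,
      ((j * n.choose j : ℝ) * p ^ (j-1) * (1-p) ^ (n-j)
        - ((j+1) * n.choose (j+1) : ℝ) * p ^ j * (1-p) ^ (n-(j+1))))
      = cst n k * gfun n k p := by
    have : ∀ j : ℕ, ((j * n.choose j : ℝ) * p ^ (j-1) * (1-p) ^ (n-j)) =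
        (fun i : ℕ => (i * n.choose i : ℝ) * p ^ (i-1) * (1-p) ^ (n-i)) j := fun _ => rfl
    set T : ℕ → ℝ := fun i => (i * n.choose i : ℝ) * p ^ (i-1) * (1-p) ^ (n-i) with hT
    have step : ∀ j, ((j+1) * n.choose (j+1) : ℝ) * p ^ j * (1-p) ^ (n-(j+1)) = T (j+1) := by
      intro j; simp only [hT, Nat.add_sub_cancel]; push_cast; ring
    have : (∑ j ∈ Finset.Icc k n, (T j - T (j+1))) = T k - T (n+1) := by
      rw [← Finset.Ico_add_one_right_eq_Icc, Finset.sum_Ico_eq_sum_range]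
      refine Eq.trans (Finset.sum_congr rfl fun i _ => by rw [add_assoc]) ?_
      rw [Finset.sum_range_sub' (fun i => T (k + i))]
      have h1 : k + (n + 1 - k) = n + 1 := by omega
      rw [h1, add_zero]
    rw [Finset.sum_congr rfl (fun j _ => by rw [step])]
    rw [this]
    have hT1 : T (n+1) = 0 := by simp [hT, Nat.choose_succ_self]
    rw [hT1, sub_zero, hT]
    unfold cst gfun
    ring
  rw [← hTel]
  exact hsum

lemma binTail_integral (n k : ℕ) (hk1 : 1 ≤ k) (hkn : k ≤ n) (p : ℝ) :
    binTail n k p = cst n k * ∫ x in (0:ℝ)..p, gfun n k x := by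
  set F : ℝ → ℝ := fun q => binTail n k q - cst n k * ∫ x in (0:ℝ)..q, gfun n k x with hF
  have hd : ∀ q : ℝ, HasDerivAt F 0 q := by
    intro q
    have h1 := hasDerivAt_binTail n k hk1 hkn q
    have h2 : HasDerivAt (fun u : ℝ => ∫ x in (0:ℝ)..u, gfun n k x) (gfun n k q) q := by
      exact intervalIntegral.integral_hasDerivAt_right
        ((gfun_continuous n k).intervalIntegrable _ _)
        ((gfun_continuous n k).stronglyMeasurableAtFilter _ _)
        (gfun_continuous n k).continuousAt
    have := h1.sub (h2.const_mul (cst n k))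
    exact this.congr_deriv (by ring)
  have hconst : F p = F 0 := by
    apply is_const_of_deriv_eq_zero (fun q => (hd q).differentiableAt) ?_
    intro q; exact (hd q).deriv
  have h0 : F 0 = 0 := by
    simp [hF, binTail_zero n k hk1]
  have h2 : binTail n k p - cst n k * ∫ x in (0:ℝ)..p, gfun n k x = 0 := hconst.trans h0
  linarith

lemma binTail_sub (n k : ℕ) (hk1 : 1 ≤ k) (hkn : k ≤ n) (u v : ℝ) :
    binTail n k v - binTail n k u = cst n k * ∫ x in u..v, gfun n k x := by
  rw [binTail_integral n k hk1 hkn v, binTail_integral n k hk1 hkn u, ← mul_sub,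
    intervalIntegral.integral_interval_sub_left
      ((gfun_continuous n k).intervalIntegrable _ _)
      ((gfun_continuous n k).intervalIntegrable _ _)]

lemma binTail_sub_le (n k : ℕ) (hk1 : 1 ≤ k) (hkn : k ≤ n) {u v C : ℝ} (huv : u ≤ v)
    (hC : ∀ x ∈ Set.Icc u v, gfun n k x ≤ C) :
    binTail n k v - binTail n k u ≤ cst n k * ((v - u) * C) := by
  rw [binTail_sub n k hk1 hkn]
  apply mul_le_mul_of_nonneg_left _ (cst_nonneg n k)
  calc ∫ x in u..v, gfun n k x ≤ ∫ _x in u..v, C := by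
        apply intervalIntegral.integral_mono_on huv
          ((gfun_continuous n k).intervalIntegrable _ _)
          (intervalIntegrable_const) hC
    _ = (v - u) * C := by rw [intervalIntegral.integral_const, smul_eq_mul]
  
lemma le_binTail_sub (n k : ℕ) (hk1 : 1 ≤ k) (hkn : k ≤ n) {u v C : ℝ} (huv : u ≤ v)
    (hC : ∀ x ∈ Set.Icc u v, C ≤ gfun n k x) :
    cst n k * ((v - u) * C) ≤ binTail n k v - binTail n k u := by
  rw [binTail_sub n k hk1 hkn]
  apply mul_le_mul_of_nonneg_left _ (cst_nonneg n k)
  calc (v - u) * C = ∫ _x in u..v, C := by rw [intervalIntegral.integral_const, smul_eq_mul]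
    _ ≤ ∫ x in u..v, gfun n k x := by
        apply intervalIntegral.integral_mono_on huv (intervalIntegrable_const)
          ((gfun_continuous n k).intervalIntegrable _ _) hC

noncomputable def mpt (n k : ℕ) : ℝ := if k = 1 then 0 else ((k:ℝ) - 1) / ((n:ℝ) - 1)

lemma mpt_mem (n k : ℕ) (hk1 : 1 ≤ k) (hkn : k ≤ n) : mpt n k ∈ Set.Icc (0:ℝ) 1 := by
  unfold mpt
  split_ifs with h
  · exact ⟨le_refl 0, zero_le_one⟩
  · have hk2 : 2 ≤ k := by omega
    have hn2 : 2 ≤ n := by omega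
    have h1 : (1:ℝ) ≤ (k:ℝ) := by exact_mod_cast hk1
    have h2 : (k:ℝ) ≤ (n:ℝ) := by exact_mod_cast hkn
    have h3 : (0:ℝ) < (n:ℝ) - 1 := by
      have : (2:ℝ) ≤ (n:ℝ) := by exact_mod_cast hn2
      linarith
    constructor
    · apply div_nonneg <;> linarith
    · rw [div_le_one h3]; linarith

lemma gfun_deriv (n k : ℕ) (hk2 : 2 ≤ k) (hkn : k + 1 ≤ n) (x : ℝ) :
    HasDerivAt (gfun n k)
      (x ^ (k-2) * (1-x) ^ (n-k-1) * (((k:ℝ) - 1) - ((n:ℝ) - 1) * x)) x := by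
  have h1 : HasDerivAt (fun y : ℝ => y ^ (k-1)) ((k-1 : ℕ) * x ^ (k-1-1)) x :=
    hasDerivAt_pow (k-1) x
  have h2 : HasDerivAt (fun y : ℝ => (1-y) ^ (n-k))
      ((n-k : ℕ) * (1-x) ^ (n-k-1) * (-1)) x := ((hasDerivAt_id x).const_sub 1).pow (n-k)
  have h3 := h1.mul h2
  refine h3.congr_deriv ?_
  have e1 : k - 1 - 1 = k - 2 := by omega
  have e2 : k - 1 = (k - 2) + 1 := by omega
  have e3 : n - k = (n - k - 1) + 1 := by omega
  have c1 : ((k - 1 : ℕ) : ℝ) = (k : ℝ) - 1 := by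
    have : 1 ≤ k := by omega
    push_cast [Nat.cast_sub this]; ring
  have c2 : ((n - k : ℕ) : ℝ) = (n : ℝ) - (k : ℝ) := by
    have : k ≤ n := by omega
    push_cast [Nat.cast_sub this]; ring
  have e2' : x ^ (k-1) = x ^ (k-2) * x := by rw [← pow_succ]; congr 1
  have e3' : (1-x) ^ (n-k) = (1-x) ^ (n-k-1) * (1-x) := by rw [← pow_succ]; congr 1
  rw [e1, c1, c2, e2', e3']
  ring

lemma gfun_mono (n k : ℕ) (hk1 : 1 ≤ k) (hkn : k ≤ n) :
    MonotoneOn (gfun n k) (Set.Icc 0 (mpt n k)) := by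
  rcases eq_or_lt_of_le hk1 with h1 | hk2
  · have : mpt n k = 0 := by unfold mpt; simp [← h1]
    rw [this]
    intro x hx y hy hxy
    have hx0 : x = 0 := le_antisymm hx.2 hx.1
    have hy0 : y = 0 := le_antisymm hy.2 hy.1
    rw [hx0, hy0]
  · rcases eq_or_lt_of_le hkn with h2 | hlt
    · -- k = n : gfun = x ^ (n-1)
      subst h2
      intro x hx y hy hxy
      unfold gfun
      simp only [Nat.sub_self, pow_zero, mul_one]
      exact pow_le_pow_left₀ hx.1 hxy _
    · have hkn' : k + 1 ≤ n := hlt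
      have hm := mpt_mem n k hk1 hkn
      apply monotoneOn_of_deriv_nonneg (convex_Icc _ _)
        ((gfun_continuous n k).continuousOn)
      · intro x _
        exact (gfun_deriv n k hk2 hkn' x).differentiableAt.differentiableWithinAt
      · intro x hx
        rw [interior_Icc] at hx
        rw [(gfun_deriv n k hk2 hkn' x).deriv]
        have hx0 : 0 ≤ x := le_of_lt hx.1
        have hx1 : x ≤ 1 := le_trans (le_of_lt hx.2) hm.2
        have hn1 : (0:ℝ) < (n:ℝ) - 1 := by
          have : 2 ≤ n := by omega
          have : (2:ℝ) ≤ (n:ℝ) := by exact_mod_cast this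
          linarith
        have hbr : 0 ≤ ((k:ℝ) - 1) - ((n:ℝ) - 1) * x := by
          have hxm : x ≤ ((k:ℝ) - 1) / ((n:ℝ) - 1) := by
            have := le_of_lt hx.2
            unfold mpt at this
            simpa [Nat.one_le_iff_ne_zero.mp hk1, show k ≠ 1 by omega] using this
          have := (le_div_iff₀ hn1).mp hxm
          linarith
        have ha : (0:ℝ) ≤ x ^ (k-2) := pow_nonneg hx0 _
        have hb : (0:ℝ) ≤ (1-x) ^ (n-k-1) := pow_nonneg (by linarith) _
        positivity

lemma gfun_anti (n k : ℕ) (hk1 : 1 ≤ k) (hkn : k ≤ n) :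
    AntitoneOn (gfun n k) (Set.Icc (mpt n k) 1) := by
  rcases eq_or_lt_of_le hk1 with h1 | hk2
  · -- k = 1 : gfun x = (1-x)^(n-1)
    subst h1
    intro x hx y hy hxy
    have hm : mpt n 1 = 0 := by unfold mpt; simp
    rw [hm] at hx hy
    unfold gfun
    simp only [Nat.sub_self, pow_zero, one_mul]
    exact pow_le_pow_left₀ (by linarith [hy.2]) (by linarith) _
  · rcases eq_or_lt_of_le hkn with h2 | hlt
    · -- k = n : mpt = 1
      subst h2
      have hm : mpt k k = 1 := by
        unfold mpt
        have : k ≠ 1 := by omega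
        rw [if_neg this]
        have h2 : (2:ℝ) ≤ (k:ℝ) := by exact_mod_cast hk2
        rw [div_self (by linarith)]
      rw [hm]
      intro x hx y hy hxy
      have hx0 : x = 1 := le_antisymm hx.2 hx.1
      have hy0 : y = 1 := le_antisymm hy.2 hy.1
      rw [hx0, hy0]
    · have hkn' : k + 1 ≤ n := hlt
      have hm := mpt_mem n k hk1 hkn
      apply antitoneOn_of_deriv_nonpos (convex_Icc _ _)
        ((gfun_continuous n k).continuousOn)
      · intro x _
        exact (gfun_deriv n k hk2 hkn' x).differentiableAt.differentiableWithinAt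
      · intro x hx
        rw [interior_Icc] at hx
        rw [(gfun_deriv n k hk2 hkn' x).deriv]
        have hx0 : 0 ≤ x := le_trans hm.1 (le_of_lt hx.1)
        have hx1 : x ≤ 1 := le_of_lt hx.2
        have hn1 : (0:ℝ) < (n:ℝ) - 1 := by
          have : 2 ≤ n := by omega
          have : (2:ℝ) ≤ (n:ℝ) := by exact_mod_cast this
          linarith
        have hbr : ((k:ℝ) - 1) - ((n:ℝ) - 1) * x ≤ 0 := by
          have hxm : ((k:ℝ) - 1) / ((n:ℝ) - 1) ≤ x := by
            have := le_of_lt hx.1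
            unfold mpt at this
            simpa [show k ≠ 1 by omega] using this
          have := (div_le_iff₀ hn1).mp hxm
          linarith
        have ha : (0:ℝ) ≤ x ^ (k-2) := pow_nonneg hx0 _
        have hb : (0:ℝ) ≤ (1-x) ^ (n-k-1) := pow_nonneg (by linarith) _
        have := mul_nonneg ha hb
        exact mul_nonpos_of_nonneg_of_nonpos this hbr

lemma Qp_zero (n k : ℕ) (hk1 : 1 ≤ k) (hkn : k ≤ n) :
    Qp n k 0 = if k = 1 then (n:ℝ) else 0 := by
  rw [← psi_eq_Qp n k hk1 hkn 0, psi, if_pos rfl]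

lemma Qp_mono_low (n k : ℕ) (hk1 : 1 ≤ k) (hkn : k ≤ n) {u v : ℝ}
    (hu : u ∈ Set.Icc 0 (mpt n k)) (hv : v ∈ Set.Icc 0 (mpt n k)) (huv : u ≤ v) :
    Qp n k u ≤ Qp n k v := by
  have hm1 : mpt n k ≤ 1 := (mpt_mem n k hk1 hkn).2
  rcases eq_or_lt_of_le hu.1 with h0 | hu0
  · -- u = 0
    rw [← h0, Qp_zero n k hk1 hkn]
    split_ifs with hk
    · -- k = 1 : mpt = 0 so v = 0
      have hm : mpt n k = 0 := by unfold mpt; simp [hk]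
      have hv0 : v = 0 := le_antisymm (hm ▸ hv.2) hv.1
      rw [hv0, Qp_zero n k hk1 hkn, if_pos hk]
    · exact Qp_nonneg n k ⟨hv.1, le_trans hv.2 hm1⟩
  · -- 0 < u
    have hv0 : 0 < v := lt_of_lt_of_le hu0 huv
    -- B u ≤ cst * (u * g u)
    have hBu : binTail n k u ≤ cst n k * ((u - 0) * gfun n k u) := by
      have := binTail_sub_le n k hk1 hkn (le_of_lt hu0)
        (C := gfun n k u) (fun x hx => gfun_mono n k hk1 hkn
          ⟨hx.1, le_trans hx.2 hu.2⟩ hu hx.2)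
      rw [binTail_zero n k hk1] at this
      linarith
    -- cst * ((v-u) * g u) ≤ B v - B u
    have hst : cst n k * ((v - u) * gfun n k u) ≤ binTail n k v - binTail n k u := by
      apply le_binTail_sub n k hk1 hkn huv
      intro x hx
      exact gfun_mono n k hk1 hkn hu ⟨le_trans hu.1 hx.1, le_trans hx.2 hv.2⟩ hx.1
    have key : u * binTail n k v ≥ v * binTail n k u := by nlinarith
    rw [binTail_eq_mul n k hk1 u, binTail_eq_mul n k hk1 v] at key
    nlinarith [key, mul_pos hu0 hv0]
  
lemma tangent_bound (n k : ℕ) (hk1 : 1 ≤ k) (hkn : k ≤ n) {α : ℝ}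
    (hα : α ∈ Set.Icc (0:ℝ) 1) (hmα : mpt n k ≤ α)
    (hG : cst n k * (α * gfun n k α) ≤ binTail n k α)
    {t : ℝ} (ht : t ∈ Set.Icc (0:ℝ) 1) :
    binTail n k t ≤ binTail n k α + cst n k * gfun n k α * (t - α) := by
  have hm0 : 0 ≤ mpt n k := (mpt_mem n k hk1 hkn).1
  rcases le_total α t with h1 | h1
  · -- α ≤ t
    have := binTail_sub_le n k hk1 hkn h1 (C := gfun n k α)
      (fun x hx => gfun_anti n k hk1 hkn ⟨hmα, hα.2⟩
        ⟨le_trans hmα hx.1, le_trans hx.2 ht.2⟩ hx.1)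
    linarith
  · rcases le_total (mpt n k) t with h2 | h2
    · -- mpt ≤ t ≤ α
      have := le_binTail_sub n k hk1 hkn h1 (C := gfun n k α)
        (fun x hx => gfun_anti n k hk1 hkn
          ⟨le_trans h2 hx.1, le_trans hx.2 hα.2⟩ ⟨hmα, hα.2⟩ hx.2)
      linarith
    · -- t ≤ mpt
      rcases eq_or_lt_of_le hm0 with hme | hml
      · -- mpt = 0, so t = 0
        have ht0 : t = 0 := le_antisymm (hme ▸ h2) ht.1
        rw [ht0, binTail_zero n k hk1]
        nlinarith [hG]
      · have hQt : mpt n k * binTail n k t ≤ t * binTail n k (mpt n k) := by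
          have hQ := Qp_mono_low n k hk1 hkn ⟨ht.1, h2⟩
            ⟨hm0, le_refl _⟩ h2
          rw [binTail_eq_mul n k hk1 t, binTail_eq_mul n k hk1 (mpt n k)]
          nlinarith [hQ, mul_nonneg ht.1 hm0]
        have hlm : binTail n k (mpt n k) ≤
            binTail n k α + cst n k * gfun n k α * (mpt n k - α) := by
          have := le_binTail_sub n k hk1 hkn hmα (C := gfun n k α)
            (fun x hx => gfun_anti n k hk1 hkn
              ⟨hx.1, le_trans hx.2 hα.2⟩ ⟨hmα, hα.2⟩ hx.2)
          linarith
        have h3 : 0 ≤ t * (binTail n k α + cst n k * gfun n k α * (mpt n k - α)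
            - binTail n k (mpt n k)) := mul_nonneg ht.1 (by linarith)
        have h4 : 0 ≤ (mpt n k - t) * (binTail n k α - cst n k * (α * gfun n k α)) :=
          mul_nonneg (by linarith) (by linarith)
        nlinarith [hQt, h3, h4, hml]

lemma binTail_continuous (n k : ℕ) (hk1 : 1 ≤ k) : Continuous (binTail n k) := by
  have : binTail n k = fun p => p * Qp n k p := funext (binTail_eq_mul n k hk1)
  rw [this]
  exact continuous_id.mul (Qp_continuous n k)

lemma binTail_bound (n k : ℕ) (hk1 : 1 ≤ k) {t : ℝ} (ht : t ∈ Set.Icc (0:ℝ) 1) :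
    |binTail n k t| ≤ ∑ j ∈ Finset.Icc k n, (n.choose j : ℝ) := by
  have h1 : (0:ℝ) ≤ 1 - t := by linarith [ht.2]
  have ht0 := ht.1
  rw [abs_le]
  constructor
  · have : 0 ≤ binTail n k t := by
      apply Finset.sum_nonneg
      intro j _
      have := pow_nonneg ht0 j
      have := pow_nonneg h1 (n - j)
      positivity
    have : 0 ≤ ∑ j ∈ Finset.Icc k n, (n.choose j : ℝ) := by positivity
    linarith [‹0 ≤ binTail n k t›]
  · apply Finset.sum_le_sum
    intro j _
    have h2 : t ^ j ≤ 1 := pow_le_one₀ ht0 ht.2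
    have h3 : (1 - t) ^ (n - j) ≤ 1 := pow_le_one₀ h1 (by linarith)
    have h4 : 0 ≤ t ^ j := pow_nonneg ht0 j
    have h5 : 0 ≤ (1 - t) ^ (n - j) := pow_nonneg h1 _
    calc (n.choose j : ℝ) * t ^ j * (1 - t) ^ (n - j)
        ≤ (n.choose j : ℝ) * 1 * 1 := by
          apply mul_le_mul (mul_le_mul (le_refl _) h2 h4 (by positivity)) h3 h5 (by positivity)
      _ = (n.choose j : ℝ) := by ring

lemma integrable_dirac' {f : ℝ → ℝ} (hf : Continuous f) (a : ℝ) :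
    Integrable f (Measure.dirac a) := by
  have : f =ᵐ[Measure.dirac a] (fun _ => f a) :=
    MeasureTheory.ae_eq_dirac' hf.measurable
  exact (integrable_const (f a)).congr this.symm

lemma integral_two_point {f : ℝ → ℝ} (hf : Continuous f) {s : ℝ} (hs0 : 0 ≤ s) (hs1 : s ≤ 1)
    (a b : ℝ) :
    ∫ t, f t ∂(ENNReal.ofReal (1 - s) • Measure.dirac a + ENNReal.ofReal s • Measure.dirac b)
      = (1 - s) * f a + s * f b := by
  rw [integral_add_measure
      (((integrable_dirac' hf a).smul_measure ENNReal.ofReal_ne_top))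
      (((integrable_dirac' hf b).smul_measure ENNReal.ofReal_ne_top)),
    integral_smul_measure, integral_smul_measure, integral_dirac, integral_dirac,
    ENNReal.toReal_ofReal (by linarith), ENNReal.toReal_ofReal hs0, smul_eq_mul, smul_eq_mul]

/-- `f_{n,k}(u) = u ⋅ sup_{p ∈ [u,1]} ψ_{n,k}(p)`. -/
noncomputable def fnk (n k : ℕ) (u : ℝ) : ℝ := u * sSup (psi n k '' Set.Icc u 1)

/-- The supremum of `∫ B_{n,t}({k,…,n}) dP(t)` over probability measures `P` on `[0,1]`
with mean at most `α` is attained and equals `f_{n,k}(α)`. -/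
theorem sup_binTail_integral_eq_fnk (n k : ℕ) (hk1 : 1 ≤ k) (hkn : k ≤ n)
    (α : ℝ) (hα : α ∈ Set.Icc (0:ℝ) 1) :
    IsGreatest {r : ℝ | ∃ P : Measure ℝ, IsProbabilityMeasure P ∧ P (Set.Icc 0 1) = 1 ∧
        (∫ t, t ∂P) ≤ α ∧ r = ∫ t, binTail n k t ∂P}
      (fnk n k α) := by
  obtain ⟨hα0, hα1⟩ := hα
  have hne : (Set.Icc α 1).Nonempty := Set.nonempty_Icc.mpr hα1
  obtain ⟨ps, hps, hmax'⟩ :=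
    isCompact_Icc.exists_isMaxOn hne (Qp_continuous n k).continuousOn
  have hmax : ∀ x ∈ Set.Icc α 1, Qp n k x ≤ Qp n k ps := fun x hx => hmax' hx
  have hsup : sSup (psi n k '' Set.Icc α 1) = Qp n k ps := by
    apply IsGreatest.csSup_eq
    constructor
    · exact ⟨ps, hps, psi_eq_Qp n k hk1 hkn ps⟩
    · rintro y ⟨x, hx, rfl⟩
      rw [psi_eq_Qp n k hk1 hkn]
      exact hmax x hx
  have hfnk : fnk n k α = α * Qp n k ps := by rw [fnk, hsup]
  have hps0 : 0 ≤ ps := le_trans hα0 hps.1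
  have hps1 : ps ≤ 1 := hps.2
  have hM0 : 0 ≤ Qp n k ps := Qp_nonneg n k ⟨hps0, hps1⟩
  constructor
  · -- membership
    rcases eq_or_lt_of_le hα0 with h0 | hαpos
    · -- α = 0
      refine ⟨Measure.dirac 0, inferInstance, Measure.dirac_apply_of_mem ⟨le_refl 0, zero_le_one⟩,
        ?_, ?_⟩
      · rw [integral_dirac]; exact le_of_eq h0
      · rw [integral_dirac, binTail_zero n k hk1, hfnk, ← h0]; ring
    · -- α > 0
      have hpspos : 0 < ps := lt_of_lt_of_le hαpos hps.1
      set s := α / ps with hs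
      have hs0 : 0 ≤ s := div_nonneg hα0 hps0
      have hs1 : s ≤ 1 := (div_le_one hpspos).mpr hps.1
      refine ⟨ENNReal.ofReal (1 - s) • Measure.dirac 0 + ENNReal.ofReal s • Measure.dirac ps,
        ?_, ?_, ?_, ?_⟩
      · constructor
        simp only [Measure.add_apply, Measure.smul_apply, smul_eq_mul, measure_univ, mul_one]
        rw [← ENNReal.ofReal_add (by linarith) hs0]
        norm_num
      · simp only [Measure.add_apply, Measure.smul_apply, smul_eq_mul,
          Measure.dirac_apply_of_mem (show (0:ℝ) ∈ Set.Icc (0:ℝ) 1 from ⟨le_refl 0, zero_le_one⟩),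
          Measure.dirac_apply_of_mem (show ps ∈ Set.Icc (0:ℝ) 1 from ⟨hps0, hps1⟩), mul_one]
        rw [← ENNReal.ofReal_add (by linarith) hs0]
        norm_num
      · rw [integral_two_point continuous_id' hs0 hs1]
        rw [hs, mul_zero, div_mul_cancel₀ _ (ne_of_gt hpspos)]
        linarith
      · rw [integral_two_point (binTail_continuous n k hk1) hs0 hs1, binTail_zero n k hk1,
          binTail_eq_mul n k hk1 ps, hfnk, hs]
        field_simp
        ring
  · -- upper bound
    rintro r ⟨P, hP, hP1, hmean, rfl⟩
    have hcomp : P (Set.Icc (0:ℝ) 1)ᶜ = 0 := by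
      rw [measure_compl measurableSet_Icc (measure_ne_top _ _), hP1, measure_univ]
      simp
    have hae : ∀ᵐ t ∂P, t ∈ Set.Icc (0:ℝ) 1 := by
      rw [MeasureTheory.ae_iff]
      exact hcomp
    have hid : Integrable (fun t : ℝ => t) P := by
      apply Integrable.mono' (integrable_const 1) aestronglyMeasurable_id
      filter_upwards [hae] with t ht
      simp only [id_eq, Real.norm_eq_abs, abs_le]
      exact ⟨by linarith [ht.1], ht.2⟩
    have hib : Integrable (binTail n k) P := by
      apply Integrable.mono' (integrable_const (∑ j ∈ Finset.Icc k n, (n.choose j : ℝ)))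
        (binTail_continuous n k hk1).aestronglyMeasurable
      filter_upwards [hae] with t ht
      exact binTail_bound n k hk1 ht
    rw [hfnk]
    by_cases hcase : ∀ t ∈ Set.Icc (0:ℝ) 1, Qp n k t ≤ Qp n k ps
    · calc ∫ t, binTail n k t ∂P ≤ ∫ t, Qp n k ps * t ∂P := by
            apply integral_mono_ae hib (hid.const_mul _)
            filter_upwards [hae] with t ht
            rw [binTail_eq_mul n k hk1]
            nlinarith [hcase t ht, ht.1, Qp_nonneg n k ht]
        _ = Qp n k ps * ∫ t, t ∂P := integral_const_mul _ _
        _ ≤ Qp n k ps * α := mul_le_mul_of_nonneg_left hmean hM0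
        _ = α * Qp n k ps := mul_comm _ _
    · push_neg at hcase
      obtain ⟨u, hu, hMu⟩ := hcase
      have huα : u < α := by
        by_contra h
        push_neg at h
        exact absurd (hmax u ⟨h, hu.2⟩) (not_le.mpr hMu)
      have hαpos : 0 < α := lt_of_le_of_lt hu.1 huα
      have hQα : Qp n k α ≤ Qp n k ps := hmax α ⟨le_refl α, hα1⟩
      have hQuα : Qp n k α < Qp n k u := lt_of_le_of_lt hQα hMu
      have hm0 : 0 ≤ mpt n k := (mpt_mem n k hk1 hkn).1
      have hm1 : mpt n k ≤ 1 := (mpt_mem n k hk1 hkn).2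
      have hmα : mpt n k < α := by
        by_contra h
        push_neg at h
        have := Qp_mono_low n k hk1 hkn ⟨hu.1, (le_of_lt huα).trans h⟩ ⟨hα0, h⟩ (le_of_lt huα)
        linarith
      -- G(α) ≤ 0
      have hG : cst n k * (α * gfun n k α) ≤ binTail n k α := by
        by_contra hG'
        push_neg at hG'
        set u' := max u (mpt n k) with hu'
        have hu'm : mpt n k ≤ u' := le_max_right _ _
        have hu'0 : 0 ≤ u' := le_trans hm0 hu'm
        have hu'α : u' < α := max_lt huα hmα
        have hQu' : Qp n k α < Qp n k u' := by
          rcases le_total u (mpt n k) with hc | hc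
          · have he : u' = mpt n k := max_eq_right hc
            have := Qp_mono_low n k hk1 hkn ⟨hu.1, hc⟩ ⟨hm0, le_refl _⟩ hc
            rw [he]
            linarith
          · have he : u' = u := max_eq_left hc
            rw [he]
            exact hQuα
        have hst : cst n k * ((α - u') * gfun n k α) ≤ binTail n k α - binTail n k u' := by
          apply le_binTail_sub n k hk1 hkn (le_of_lt hu'α)
          intro x hx
          exact gfun_anti n k hk1 hkn ⟨le_trans hu'm hx.1, le_trans hx.2 hα1⟩
            ⟨le_of_lt hmα, hα1⟩ hx.2
        have c1 : α * binTail n k u' < u' * binTail n k α := by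
          have h1 := mul_lt_mul_of_pos_left hG' (sub_pos.mpr hu'α)
          have h2 := mul_le_mul_of_nonneg_left hst (le_of_lt hαpos)
          nlinarith [h1, h2]
        have c2 : u' * binTail n k α ≤ α * binTail n k u' := by
          rw [binTail_eq_mul n k hk1 α, binTail_eq_mul n k hk1 u']
          nlinarith [hQu', mul_nonneg hu'0 (le_of_lt hαpos)]
        linarith
      -- tangent line bound
      have hQαnn : 0 ≤ Qp n k α := Qp_nonneg n k ⟨hα0, hα1⟩
      have hgα : 0 ≤ gfun n k α := gfun_nonneg n k ⟨hα0, hα1⟩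
      have hsnn : 0 ≤ cst n k * gfun n k α := mul_nonneg (cst_nonneg n k) hgα
      calc ∫ t, binTail n k t ∂P
          ≤ ∫ t, (binTail n k α - cst n k * gfun n k α * α) + cst n k * gfun n k α * t ∂P := by
            apply integral_mono_ae hib
              ((integrable_const _).add (hid.const_mul _))
            filter_upwards [hae] with t ht
            have := tangent_bound n k hk1 hkn ⟨hα0, hα1⟩ (le_of_lt hmα) hG ht
            simp only [Pi.add_apply]
            linarith
        _ = (binTail n k α - cst n k * gfun n k α * α)
            + cst n k * gfun n k α * ∫ t, t ∂P := by
            rw [integral_add (integrable_const _) (hid.const_mul _), integral_const,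
              integral_const_mul, probReal_univ, one_smul]
        _ ≤ (binTail n k α - cst n k * gfun n k α * α) + cst n k * gfun n k α * α := by
            have := mul_le_mul_of_nonneg_left hmean hsnn
            linarith
        _ = binTail n k α := by ring
        _ = α * Qp n k α := binTail_eq_mul n k hk1 α
        _ ≤ α * Qp n k ps := mul_le_mul_of_nonneg_left hQα hα0
end

section
/- Let n ∈ ℕ, 1 ≤ k ≤ n, let Q be a Borel probability measure on [0,1] and let β ∈ [0,1]. Then the n-fold product measure Q^{⊗n} on [0,1]^n satisfies Q^{⊗n}({u ∈ [0,1]^n : U_{k:n}(u) ≤ β}) = B_{n, Q([0,β])}({k,…,n}), and likewise Q^{⊗n}({u ∈ [0,1]^n : U_{k:n}(u) < β}) = B_{n, Q([0,β))}({k,…,n}). -/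
open MeasureTheory

/-- The `k`-th order statistic (k-th smallest coordinate) of `u : Fin n → α`,
with default value `d` (irrelevant for `1 ≤ k ≤ n`). -/
noncomputable def orderStat {α : Type*} [LinearOrder α] {n : ℕ} (k : ℕ) (u : Fin n → α)
    (d : α) : α :=
  ((Multiset.map u Finset.univ.val).sort (· ≤ ·)).getD (k - 1) d

/-- For a sorted list, a downward-closed predicate holds at index `i` (with default)
iff more than `i` elements of the list satisfy it. -/
lemma sorted_getD_iff {l : List ℝ} (hl : l.Pairwise (· ≤ ·)) {p : ℝ → Prop}
    [DecidablePred p] (hp : ∀ x y, x ≤ y → p y → p x) {i : ℕ} (hi : i < l.length) (d : ℝ) :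
    p (l.getD i d) ↔ i < l.countP (fun x => decide (p x)) := by
  rw [List.getD_eq_getElem l d hi]
  constructor
  · intro h
    have htd : l = l.take (i+1) ++ l.drop (i+1) := (List.take_append_drop _ _).symm
    have h1 : (l.take (i+1)).countP (fun x => decide (p x)) = i + 1 := by
      rw [List.countP_eq_length.2, List.length_take]
      · omega
      · intro a ha
        simp only [decide_eq_true_eq]
        obtain ⟨j, hj, rfl⟩ := List.getElem_of_mem ha
        have hj' : j ≤ i := by
          have := hj; rw [List.length_take] at this; omega
        rw [List.getElem_take]
        rcases lt_or_eq_of_le hj' with h' | h'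
        · exact hp _ _ (hl.rel_get_of_lt (a := ⟨j, by omega⟩) (b := ⟨i, hi⟩) h') h
        · subst h'; exact h
    calc i < i + 1 := Nat.lt_succ_self i
      _ = (l.take (i+1)).countP _ := h1.symm
      _ ≤ l.countP _ := by
          conv_rhs => rw [htd]
          rw [List.countP_append]; omega
  · intro h
    by_contra hnp
    have key : ∀ j (hj : j < l.length), i ≤ j → ¬ p l[j] := by
      intro j hj hij hpj
      rcases eq_or_lt_of_le hij with h' | h'
      · exact hnp (h' ▸ hpj)
      · exact hnp (hp _ _ (hl.rel_get_of_lt (a := ⟨i, hi⟩) (b := ⟨j, hj⟩) h') hpj)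
    have hc : l.countP (fun x => decide (p x)) ≤ i := by
      have htd : l = l.take i ++ l.drop i := (List.take_append_drop _ _).symm
      conv_lhs => rw [htd]
      rw [List.countP_append]
      have h2 : (l.drop i).countP (fun x => decide (p x)) = 0 := by
        rw [List.countP_eq_zero]
        intro a ha
        obtain ⟨j, hj, rfl⟩ := List.getElem_of_mem ha
        have hj' : i + j < l.length := by
          have := hj; rw [List.length_drop] at this; omega
        rw [List.getElem_drop]
        simpa using key (i + j) hj' (by omega)
      have h3 : (l.take i).countP (fun x => decide (p x)) ≤ i := by
        calc _ ≤ (l.take i).length := List.countP_le_length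
          _ ≤ i := by simp [List.length_take]
      omega
    omega

/-- The event "exactly `j` coordinates lie in `s`" is a union of products. -/
lemma setOf_card_eq (n j : ℕ) (s : Set ℝ) [DecidablePred (· ∈ s)] :
    {u : Fin n → ℝ | (Finset.univ.filter fun i => u i ∈ s).card = j}
      = ⋃ S ∈ Finset.powersetCard j (Finset.univ : Finset (Fin n)),
          Set.univ.pi (fun i => if i ∈ S then s else sᶜ) := by
  ext u
  simp only [Set.mem_setOf_eq, Set.mem_iUnion, Finset.mem_powersetCard_univ, Set.mem_pi,
    Set.mem_univ, forall_true_left, exists_prop]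
  constructor
  · intro h
    refine ⟨Finset.univ.filter fun i => u i ∈ s, h, fun i => ?_⟩
    by_cases hi : u i ∈ s <;> simp [hi]
  · rintro ⟨S, hS, hmem⟩
    have : Finset.univ.filter (fun i => u i ∈ s) = S := by
      ext i
      simp only [Finset.mem_filter, Finset.mem_univ, true_and]
      have h := hmem i
      by_cases hi : i ∈ S <;> simp [hi] at h ⊢ <;> tauto
    rw [this, hS]

lemma measurable_setOf_card_eq (n j : ℕ) {s : Set ℝ} (hs : MeasurableSet s)
    [DecidablePred (· ∈ s)] :
    MeasurableSet {u : Fin n → ℝ | (Finset.univ.filter fun i => u i ∈ s).card = j} := by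
  rw [setOf_card_eq]
  refine Finset.measurableSet_biUnion _ fun S _ => ?_
  exact MeasurableSet.univ_pi fun i => by by_cases hi : i ∈ S <;> simp [hi, hs, hs.compl]

/-- Binomial probabilities for the number of i.i.d. coordinates falling in `s`. -/
lemma measure_card_filter_eq (n : ℕ) (μ : Measure ℝ) [IsProbabilityMeasure μ] {s : Set ℝ}
    (hs : MeasurableSet s) [DecidablePred (· ∈ s)] (j : ℕ) :
    Measure.pi (fun _ : Fin n => μ)
        {u : Fin n → ℝ | (Finset.univ.filter fun i => u i ∈ s).card = j}
      = (n.choose j) * μ s ^ j * (1 - μ s) ^ (n - j) := by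
  rw [setOf_card_eq]
  have hdisj : (↑(Finset.powersetCard j (Finset.univ : Finset (Fin n))) :
      Set (Finset (Fin n))).PairwiseDisjoint
      (fun S => Set.univ.pi fun i => if i ∈ S then s else sᶜ) := by
    intro S hS T hT hST
    rw [Function.onFun, Set.disjoint_left]
    intro u huS huT
    have hex : ∃ i, (i ∈ S ∧ i ∉ T) ∨ (i ∉ S ∧ i ∈ T) := by
      by_contra hc
      push_neg at hc
      exact hST (by ext i; have := hc i; tauto)
    obtain ⟨i, hi⟩ := hex
    have h1 := huS i (Set.mem_univ i)
    have h2 := huT i (Set.mem_univ i)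
    rcases hi with ⟨h3, h4⟩ | ⟨h3, h4⟩ <;> simp only [if_pos, if_neg, h3, h4, if_true,
      if_false, Set.mem_compl_iff] at h1 h2 <;> [exact h2 h1; exact h1 h2]
  rw [measure_biUnion_finset hdisj (fun S _ =>
    MeasurableSet.univ_pi fun i => by by_cases hi : i ∈ S <;> simp [hi, hs, hs.compl])]
  have hval : ∀ S ∈ Finset.powersetCard j (Finset.univ : Finset (Fin n)),
      Measure.pi (fun _ : Fin n => μ) (Set.univ.pi fun i => if i ∈ S then s else sᶜ)
        = μ s ^ j * (1 - μ s) ^ (n - j) := by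
    intro S hS
    have hcard : S.card = j := (Finset.mem_powersetCard_univ.1 hS)
    rw [Measure.pi_pi]
    simp only [apply_ite μ]
    rw [Finset.prod_ite (fun _ => μ s) (fun _ => μ sᶜ), Finset.prod_const, Finset.prod_const]
    have h1 : Finset.univ.filter (· ∈ S) = S := Finset.filter_univ_mem S
    have h2 : Finset.univ.filter (· ∉ S) = Sᶜ := by
      ext i; simp
    rw [h1, h2, hcard, Finset.card_compl, hcard, Fintype.card_fin,
      prob_compl_eq_one_sub hs]
  rw [Finset.sum_congr rfl hval, Finset.sum_const, Finset.card_powersetCard,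
    Finset.card_univ, Fintype.card_fin, nsmul_eq_mul, mul_assoc]

/-- The binomial upper-tail probability for the number of coordinates falling in `s`. -/
lemma measure_tail (n k : ℕ) (μ : Measure ℝ) [IsProbabilityMeasure μ] {s : Set ℝ}
    (hs : MeasurableSet s) [DecidablePred (· ∈ s)] :
    Measure.pi (fun _ : Fin n => μ)
        {u : Fin n → ℝ | k ≤ (Finset.univ.filter fun i => u i ∈ s).card}
      = ENNReal.ofReal (binTail n k (μ s).toReal) := by
  have hsplit : {u : Fin n → ℝ | k ≤ (Finset.univ.filter fun i => u i ∈ s).card}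
      = ⋃ j ∈ Finset.Icc k n,
          {u : Fin n → ℝ | (Finset.univ.filter fun i => u i ∈ s).card = j} := by
    ext u
    simp only [Set.mem_setOf_eq, Set.mem_iUnion, Finset.mem_Icc, exists_prop]
    constructor
    · intro h
      exact ⟨_, ⟨h, (Finset.card_filter_le _ _).trans (by simp)⟩, rfl⟩
    · rintro ⟨j, ⟨hj1, _⟩, hj⟩
      omega
  have hdisj : (↑(Finset.Icc k n) : Set ℕ).PairwiseDisjoint
      (fun j => {u : Fin n → ℝ | (Finset.univ.filter fun i => u i ∈ s).card = j}) := by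
    intro a _ b _ hab
    rw [Function.onFun, Set.disjoint_left]
    intro u h1 h2
    exact hab (h1.symm.trans h2)
  rw [hsplit, measure_biUnion_finset hdisj (fun j _ => measurable_setOf_card_eq n j hs)]
  have hμ1 : μ s ≤ 1 := prob_le_one
  have hμt : μ s ≠ ⊤ := (hμ1.trans_lt ENNReal.one_lt_top).ne
  have h1t : (1 : ENNReal) - μ s ≠ ⊤ := (tsub_le_self.trans_lt ENNReal.one_lt_top).ne
  have hto : ((1 : ENNReal) - μ s).toReal = 1 - (μ s).toReal := by
    rw [ENNReal.toReal_sub_of_le hμ1 ENNReal.one_ne_top, ENNReal.toReal_one]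
  rw [binTail, ENNReal.ofReal_sum_of_nonneg]
  · refine Finset.sum_congr rfl fun j _ => ?_
    rw [measure_card_filter_eq n μ hs j]
    rw [ENNReal.ofReal_mul (by positivity), ENNReal.ofReal_mul (by positivity),
      ENNReal.ofReal_pow ENNReal.toReal_nonneg,
      ENNReal.ofReal_pow (by rw [← hto]; exact ENNReal.toReal_nonneg),
      ENNReal.ofReal_natCast, ENNReal.ofReal_toReal hμt, ← hto, ENNReal.ofReal_toReal h1t]
  · intro j _
    have h0 : (0:ℝ) ≤ (μ s).toReal := ENNReal.toReal_nonneg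
    have h1 : (μ s).toReal ≤ 1 := by
      rw [← ENNReal.toReal_one]
      exact ENNReal.toReal_mono ENNReal.one_ne_top hμ1
    have h2 : (0:ℝ) ≤ 1 - (μ s).toReal := by linarith
    positivity

/-- A downward-closed predicate holds at the `k`-th order statistic iff at least `k`
coordinates satisfy it. -/
lemma orderStat_pred_iff {n k : ℕ} (hk1 : 1 ≤ k) (hkn : k ≤ n) (u : Fin n → ℝ)
    {p : ℝ → Prop} [DecidablePred p] (hp : ∀ x y, x ≤ y → p y → p x) (d : ℝ) :
    p (orderStat k u d) ↔ k ≤ (Finset.univ.filter fun i => p (u i)).card := by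
  unfold orderStat
  set m := Multiset.map u Finset.univ.val with hm
  have hlen : (m.sort (· ≤ ·)).length = n := by
    rw [Multiset.length_sort, hm, Multiset.card_map]
    simp
  have hi : k - 1 < (m.sort (· ≤ ·)).length := by omega
  rw [sorted_getD_iff (Multiset.pairwise_sort _ _) hp hi d]
  have hc : (m.sort (· ≤ ·)).countP (fun x => decide (p x))
      = (Finset.univ.filter fun i => p (u i)).card := by
    have h1 : Multiset.countP p ((m.sort (· ≤ ·) : List ℝ) : Multiset ℝ)
        = Multiset.countP p m := by rw [Multiset.sort_eq]
    rw [Multiset.coe_countP] at h1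
    rw [h1, hm, Multiset.countP_map]
    rw [Finset.card, Finset.filter_val]
  omega

/-- Distribution function of order statistics under an i.i.d. product:
`Q^{⊗n}(U_{k:n} ≤ β) = B_{n, Q([0,β])}({k,…,n})` and
`Q^{⊗n}(U_{k:n} < β) = B_{n, Q([0,β))}({k,…,n})`. -/
theorem orderStat_cdf (n k : ℕ) (hk1 : 1 ≤ k) (hkn : k ≤ n)
    (Q : Measure ℝ) [IsProbabilityMeasure Q] (hQ : Q (Set.Icc 0 1) = 1)
    (β : ℝ) (hβ : β ∈ Set.Icc (0:ℝ) 1) :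
    (Measure.pi fun _ : Fin n => Q) {u : Fin n → ℝ | orderStat k u 0 ≤ β}
      = ENNReal.ofReal (binTail n k (Q (Set.Icc 0 β)).toReal) ∧
    (Measure.pi fun _ : Fin n => Q) {u : Fin n → ℝ | orderStat k u 0 < β}
      = ENNReal.ofReal (binTail n k (Q (Set.Ico 0 β)).toReal) := by
  classical
  obtain ⟨hβ0, hβ1⟩ := hβ
  have h0 : Q (Set.Iio 0) = 0 := by
    have hcomp : Q (Set.Icc (0:ℝ) 1)ᶜ = 0 := by
      rw [prob_compl_eq_one_sub measurableSet_Icc, hQ, tsub_self]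
    refine measure_mono_null ?_ hcomp
    intro x hx
    simp only [Set.mem_Iio] at hx
    simp only [Set.mem_compl_iff, Set.mem_Icc, not_and_or, not_le]
    left; exact hx
  constructor
  · have hseq : {u : Fin n → ℝ | orderStat k u 0 ≤ β}
        = {u : Fin n → ℝ | k ≤ (Finset.univ.filter fun i => u i ∈ Set.Iic β).card} := by
      ext u
      simp only [Set.mem_setOf_eq, Set.mem_Iic]
      exact orderStat_pred_iff hk1 hkn u (p := (· ≤ β)) (fun x y hxy hy => hxy.trans hy) 0
    have hQeq : Q (Set.Iic β) = Q (Set.Icc 0 β) := by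
      refine le_antisymm ?_ (measure_mono Set.Icc_subset_Iic_self)
      rw [← Set.Iio_union_Icc_eq_Iic hβ0]
      calc Q (Set.Iio 0 ∪ Set.Icc 0 β) ≤ Q (Set.Iio 0) + Q (Set.Icc 0 β) :=
            measure_union_le _ _
        _ = Q (Set.Icc 0 β) := by rw [h0, zero_add]
    rw [hseq, measure_tail n k Q measurableSet_Iic, hQeq]
  · have hseq : {u : Fin n → ℝ | orderStat k u 0 < β}
        = {u : Fin n → ℝ | k ≤ (Finset.univ.filter fun i => u i ∈ Set.Iio β).card} := by
      ext u
      simp only [Set.mem_setOf_eq, Set.mem_Iio]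
      exact orderStat_pred_iff hk1 hkn u (p := (· < β)) (fun x y hxy hy => hxy.trans_lt hy) 0
    have hQeq : Q (Set.Iio β) = Q (Set.Ico 0 β) := by
      have hu : Set.Iio (0:ℝ) ∪ Set.Ico 0 β = Set.Iio β := by
        rw [Set.Iio_union_Ico (by simp [hβ0]), sup_eq_right.2 hβ0]
      refine le_antisymm ?_ (measure_mono Set.Ico_subset_Iio_self)
      rw [← hu]
      calc Q (Set.Iio 0 ∪ Set.Ico 0 β) ≤ Q (Set.Iio 0) + Q (Set.Ico 0 β) :=
            measure_union_le _ _
        _ = Q (Set.Ico 0 β) := by rw [h0, zero_add]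
    rw [hseq, measure_tail n k Q measurableSet_Iio, hQeq]
end

section
/- Let t ∈ [0,1], let P be the uniform distribution on [0,1], and define K(x,·) := t δ_{xt} + (1-t) U_{[t,1]} for x ∈ [0,1], where U_{[t,1]} denotes the uniform distribution on [t,1] (interpreted as δ_1 if t = 1). Then K is a Markov kernel from [0,1] to [0,1], and for every α ∈ [0,1] one has K(x,[0,α]) = t·1{xt ≤ α} + max(α - t, 0) for all x ∈ [0,1], and ∫_0^1 K(x,[0,α]) dx = α; in particular K is a P-kernel for P. -/
open MeasureTheory

/-- The uniform distribution on `[a,b]` (interpreted as `δ_b` when `a ≥ b`). -/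
noncomputable def unif (a b : ℝ) : Measure ℝ :=
  if a < b then (ENNReal.ofReal (b - a))⁻¹ • volume.restrict (Set.Icc a b)
  else Measure.dirac b

/-- The kernel `K(x,·) = t δ_{xt} + (1-t) U_{[t,1]}` from `[0,1]` to `[0,1]`. -/
noncomputable def Kt (t : ℝ) (x : ℝ) : Measure ℝ :=
  ENNReal.ofReal t • Measure.dirac (x * t) + ENNReal.ofReal (1 - t) • unif t 1

lemma unif_Icc (t α : ℝ) (ht0 : 0 ≤ t) (ht1 : t < 1) (hα : α ≤ 1) :
    unif t 1 (Set.Icc 0 α) = (ENNReal.ofReal (1 - t))⁻¹ * ENNReal.ofReal (α - t) := by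
  rw [unif, if_pos ht1]
  rw [Measure.smul_apply, Measure.restrict_apply measurableSet_Icc, Set.Icc_inter_Icc]
  rw [max_eq_right ht0, min_eq_left hα, Real.volume_Icc]
  rfl

lemma unif_univ (t : ℝ) (ht0 : 0 ≤ t) (ht1 : t ≤ 1) : unif t 1 Set.univ = 1 := by
  rcases lt_or_ge t 1 with h | h
  · rw [unif, if_pos h, Measure.smul_apply, Measure.restrict_apply_univ, Real.volume_Icc]
    rw [smul_eq_mul, ENNReal.inv_mul_cancel]
    · simp [ENNReal.ofReal_pos]; linarith
    · exact ENNReal.ofReal_ne_top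
  · rw [unif, if_neg (not_lt.mpr h)]; simp

lemma ofReal_smul_cancel {a : ℝ} (h : 0 < a) (b : ENNReal) (hb : b ≠ ⊤) :
    ENNReal.ofReal a * ((ENNReal.ofReal a)⁻¹ * b) = b := by
  rw [← mul_assoc, ENNReal.mul_inv_cancel (by simp [ENNReal.ofReal_pos, h]) ENNReal.ofReal_ne_top, one_mul]

lemma Kt_Icc (t x α : ℝ) (ht : t ∈ Set.Icc (0:ℝ) 1) (hα : α ∈ Set.Icc (0:ℝ) 1)
    (hx : 0 ≤ x) :
    Kt t x (Set.Icc 0 α)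
      = ENNReal.ofReal (t * (if x * t ≤ α then 1 else 0) + max (α - t) 0) := by
  obtain ⟨ht0, ht1⟩ := ht
  obtain ⟨hα0, hα1⟩ := hα
  have hxt : 0 ≤ x * t := mul_nonneg hx ht0
  rw [Kt, Measure.add_apply, Measure.smul_apply, Measure.smul_apply, Measure.dirac_apply]
  have hind : Set.indicator (Set.Icc 0 α) (1 : ℝ → ENNReal) (x * t)
      = if x * t ≤ α then 1 else 0 := by
    by_cases h : x * t ≤ α
    · rw [Set.indicator_of_mem (Set.mem_Icc.mpr ⟨hxt, h⟩), if_pos h]; rfl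
    · rw [Set.indicator_of_notMem (fun hm => h hm.2), if_neg h]
  rw [hind]
  rcases lt_or_ge t 1 with h1 | h1
  · rw [unif_Icc t α ht0 h1 hα1, smul_eq_mul, smul_eq_mul,
      ofReal_smul_cancel (by linarith) _ ENNReal.ofReal_ne_top]
    have : ENNReal.ofReal (α - t) = ENNReal.ofReal (max (α - t) 0) := by
      rcases le_or_gt (α - t) 0 with h | h
      · rw [max_eq_right h, ENNReal.ofReal_eq_zero.mpr h, ENNReal.ofReal_zero]
      · rw [max_eq_left h.le]
    rw [this, ENNReal.ofReal_add (by positivity) (le_max_right _ _)]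
    by_cases h : x * t ≤ α <;> simp [h]
  · have ht1' : t = 1 := le_antisymm ht1 h1
    subst ht1'
    simp only [sub_self, ENNReal.ofReal_zero, zero_smul, add_zero, smul_eq_mul]
    have : max (α - 1) 0 = 0 := max_eq_right (by linarith)
    rw [this, add_zero]
    rw [mul_one]
    split_ifs <;> simp

lemma Kt_integral (t α : ℝ) (ht : t ∈ Set.Icc (0:ℝ) 1) (hα : α ∈ Set.Icc (0:ℝ) 1) :
    ∫⁻ x, Kt t x (Set.Icc 0 α) ∂(volume.restrict (Set.Icc 0 1)) = ENNReal.ofReal α := by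
  obtain ⟨ht0, ht1⟩ := ht
  obtain ⟨hα0, hα1⟩ := hα
  rcases le_or_gt t α with hcase | hcase
  · rw [setLIntegral_congr_fun_ae measurableSet_Icc
      (g := fun _ => ENNReal.ofReal α)
      (Filter.Eventually.of_forall fun x hx => by
        rw [Kt_Icc t x α ⟨ht0, ht1⟩ ⟨hα0, hα1⟩ hx.1]
        have hxt : x * t ≤ α := le_trans (by nlinarith [hx.2] : x * t ≤ t) hcase
        rw [if_pos hxt, max_eq_left (by linarith), mul_one]
        ring_nf)]
    rw [setLIntegral_const, Real.volume_Icc]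
    simp
  · have ht0' : 0 < t := lt_of_le_of_lt hα0 hcase
    have hc0 : 0 ≤ α / t := div_nonneg hα0 ht0
    have hc1 : α / t ≤ 1 := by rw [div_le_one ht0']; linarith
    rw [setLIntegral_congr_fun_ae measurableSet_Icc
      (g := fun x => Set.indicator (Set.Iic (α / t)) (fun _ => ENNReal.ofReal t) x)
      (Filter.Eventually.of_forall fun x hx => by
        rw [Kt_Icc t x α ⟨ht0, ht1⟩ ⟨hα0, hα1⟩ hx.1, max_eq_right (by linarith), add_zero]
        by_cases h : x ≤ α / t
        · rw [Set.indicator_of_mem (Set.mem_Iic.mpr h),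
            if_pos ((le_div_iff₀ ht0').mp h), mul_one]
        · rw [Set.indicator_of_notMem (fun hm => h (Set.mem_Iic.mp hm)),
            if_neg (fun hle => h ((le_div_iff₀ ht0').mpr hle)), mul_zero, ENNReal.ofReal_zero])]
    rw [lintegral_indicator measurableSet_Iic, Measure.restrict_restrict measurableSet_Iic,
      setLIntegral_const]
    have hset : Set.Iic (α / t) ∩ Set.Icc 0 1 = Set.Icc 0 (α / t) :=
      Set.ext fun y => ⟨fun ⟨h1, h2, _⟩ => ⟨h2, h1⟩, fun ⟨h2, h1⟩ => ⟨h1, h2, h1.trans hc1⟩⟩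
    rw [hset, Real.volume_Icc, sub_zero, ← ENNReal.ofReal_mul ht0, mul_comm,
      div_mul_cancel₀ α (ne_of_gt ht0')]

/-- `K(x,·) = t δ_{xt} + (1-t) U_{[t,1]}` is a Markov kernel from `[0,1]` to `[0,1]` with
`K(x,[0,α]) = t·1{xt ≤ α} + max(α-t,0)` and `∫₀¹ K(x,[0,α]) dx = α`; in particular `K` is a
P-kernel for the uniform distribution `P` on `[0,1]`. -/
theorem Kt_is_pkernel (t : ℝ) (ht : t ∈ Set.Icc (0:ℝ) 1) :
    Measurable (fun x : ℝ => Kt t x) ∧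
    (∀ x ∈ Set.Icc (0:ℝ) 1, IsProbabilityMeasure (Kt t x) ∧ Kt t x (Set.Icc 0 1) = 1) ∧
    (∀ α ∈ Set.Icc (0:ℝ) 1, ∀ x ∈ Set.Icc (0:ℝ) 1,
      Kt t x (Set.Icc 0 α)
        = ENNReal.ofReal (t * (if x * t ≤ α then 1 else 0) + max (α - t) 0)) ∧
    (∀ α ∈ Set.Icc (0:ℝ) 1,
      ∫⁻ x, Kt t x (Set.Icc 0 α) ∂(volume.restrict (Set.Icc 0 1)) = ENNReal.ofReal α) ∧
    (∀ α ∈ Set.Icc (0:ℝ) 1,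
      ∫⁻ x, Kt t x (Set.Icc 0 α) ∂(volume.restrict (Set.Icc 0 1)) ≤ ENNReal.ofReal α) := by
  obtain ⟨ht0, ht1⟩ := ht
  have hof : ENNReal.ofReal t + ENNReal.ofReal (1 - t) = 1 := by
    rw [← ENNReal.ofReal_add ht0 (by linarith)]
    norm_num
  refine ⟨?_, ?_, ?_, ?_, ?_⟩
  · apply Measure.measurable_of_measurable_coe
    intro s hs
    have : (fun x : ℝ => Kt t x s)
        = fun x => ENNReal.ofReal t * Set.indicator s 1 (x * t)
            + ENNReal.ofReal (1 - t) * unif t 1 s := by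
      funext x
      rw [Kt, Measure.add_apply, Measure.smul_apply, Measure.smul_apply,
        Measure.dirac_apply, smul_eq_mul, smul_eq_mul]
    rw [this]
    exact ((measurable_const.mul
      ((measurable_one.indicator hs).comp (measurable_id.mul_const t))).add measurable_const)
  · intro x hx
    have h1 : Kt t x (Set.Icc 0 1) = 1 := by
      rw [Kt_Icc t x 1 ⟨ht0, ht1⟩ (by norm_num) hx.1,
        if_pos (by nlinarith [hx.1, hx.2] : x * t ≤ 1), mul_one,
        max_eq_left (by linarith), ← hof, ENNReal.ofReal_add ht0 (by linarith)]
    refine ⟨⟨?_⟩, h1⟩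
    rw [Kt, Measure.add_apply, Measure.smul_apply, Measure.smul_apply,
      Measure.dirac_apply, unif_univ t ht0 ht1, Set.indicator_univ,
      Pi.one_apply, smul_eq_mul, smul_eq_mul, mul_one, mul_one, hof]
  · intro α hα x hx
    exact Kt_Icc t x α ⟨ht0, ht1⟩ hα hx.1
  · intro α hα
    exact Kt_integral t α ⟨ht0, ht1⟩ hα
  · intro α hα
    exact le_of_eq (Kt_integral t α ⟨ht0, ht1⟩ hα)
end

section
/- Let t ∈ (0,1], let P be the uniform distribution on [0,1], and define K(x,·) := t δ_{xt} + (1-t) U_{[t,1]} for x ∈ [0,1], where U_{[t,1]} denotes the uniform distribution on [t,1] (interpreted as δ_1 if t = 1). Then for every α ∈ [0,1], the pushforward under P of the map x ↦ K(x,[0,α]) equals the pushforward under P of the map x ↦ K(x,[0,α)), and both equal the two-point measure (1 - min(α/t, 1)) δ_{max(α-t,0)} + min(α/t, 1) δ_{t + max(α-t,0)} on [0,1]. -/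
open MeasureTheory

lemma map_step (β : ℝ) (hβ : 0 ≤ β) (c d : ℝ) :
    Measure.map (fun x => if x ≤ β then c else d) (volume.restrict (Set.Icc (0:ℝ) 1))
      = ENNReal.ofReal (1 - min β 1) • Measure.dirac d
        + ENNReal.ofReal (min β 1) • Measure.dirac c := by
  have hmeas : Measurable (fun x : ℝ => if x ≤ β then c else d) :=
    Measurable.ite measurableSet_Iic measurable_const measurable_const
  have hm0 : 0 ≤ min β 1 := le_min hβ zero_le_one
  have hm1 : min β 1 ≤ 1 := min_le_right _ _
  have hv1 : volume (Set.Iic β ∩ Set.Icc (0:ℝ) 1) = ENNReal.ofReal (min β 1) := by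
    have : Set.Iic β ∩ Set.Icc (0:ℝ) 1 = Set.Icc 0 (min β 1) := by
      ext x
      simp only [Set.mem_inter_iff, Set.mem_Iic, Set.mem_Icc, le_min_iff]
      tauto
    rw [this, Real.volume_Icc, sub_zero]
  have hv2 : volume (Set.Ioi β ∩ Set.Icc (0:ℝ) 1) = ENNReal.ofReal (1 - min β 1) := by
    have : Set.Ioi β ∩ Set.Icc (0:ℝ) 1 = Set.Ioc β 1 := by
      ext x
      constructor
      · rintro ⟨h1, _, h3⟩; exact ⟨h1, h3⟩
      · rintro ⟨h1, h2⟩; exact ⟨h1, le_trans hβ h1.le, h2⟩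
    rw [this, Real.volume_Ioc]
    rcases le_total β 1 with h | h
    · rw [min_eq_left h]
    · rw [min_eq_right h, sub_self, ENNReal.ofReal_zero,
        ENNReal.ofReal_eq_zero.mpr (by linarith)]
  ext s hs
  rw [Measure.map_apply hmeas hs, Measure.restrict_apply (hmeas hs), Measure.add_apply,
    Measure.smul_apply, Measure.smul_apply, smul_eq_mul, smul_eq_mul,
    Measure.dirac_apply' _ hs, Measure.dirac_apply' _ hs]
  by_cases hc : c ∈ s <;> by_cases hd : d ∈ s
  · have hpre : (fun x => if x ≤ β then c else d) ⁻¹' s = Set.univ := by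
      ext x; simp only [Set.mem_preimage, Set.mem_univ, iff_true]
      split <;> assumption
    rw [hpre, Set.univ_inter, Real.volume_Icc]
    simp only [Set.indicator_of_mem hc, Set.indicator_of_mem hd, Pi.one_apply, mul_one]
    rw [← ENNReal.ofReal_add (by linarith) hm0]
    norm_num
  · have hpre : (fun x => if x ≤ β then c else d) ⁻¹' s = Set.Iic β := by
      ext x; simp only [Set.mem_preimage, Set.mem_Iic]
      split
      · next h => exact iff_of_true hc h
      · next h => exact iff_of_false hd h
    rw [hpre, hv1]
    simp [Set.indicator_of_mem hc, Set.indicator_of_notMem hd]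
  · have hpre : (fun x => if x ≤ β then c else d) ⁻¹' s = Set.Ioi β := by
      ext x; simp only [Set.mem_preimage, Set.mem_Ioi]
      split
      · next h => exact iff_of_false hc (not_lt.mpr h)
      · next h => exact iff_of_true hd (not_le.mp h)
    rw [hpre, hv2]
    simp [Set.indicator_of_notMem hc, Set.indicator_of_mem hd]
  · have hpre : (fun x => if x ≤ β then c else d) ⁻¹' s = ∅ := by
      ext x; simp only [Set.mem_preimage, Set.mem_empty_iff_false, iff_false]
      split <;> assumption
    rw [hpre, Set.empty_inter, measure_empty]
    simp [Set.indicator_of_notMem hc, Set.indicator_of_notMem hd]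

/-- For `t ∈ (0,1]` and the uniform distribution `P` on `[0,1]`, the pushforwards of
`x ↦ K(x,[0,α])` and `x ↦ K(x,[0,α))` under `P` coincide and equal the two-point measure
`(1 - min(α/t,1)) δ_{max(α-t,0)} + min(α/t,1) δ_{t + max(α-t,0)}`. -/
theorem Kt_pushforward (t : ℝ) (ht : t ∈ Set.Ioc (0:ℝ) 1) (α : ℝ) (hα : α ∈ Set.Icc (0:ℝ) 1) :
    Measure.map (fun x => (Kt t x (Set.Icc 0 α)).toReal) (volume.restrict (Set.Icc (0:ℝ) 1))
      = Measure.map (fun x => (Kt t x (Set.Ico 0 α)).toReal)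
          (volume.restrict (Set.Icc (0:ℝ) 1)) ∧
    Measure.map (fun x => (Kt t x (Set.Icc 0 α)).toReal) (volume.restrict (Set.Icc (0:ℝ) 1))
      = ENNReal.ofReal (1 - min (α / t) 1) • Measure.dirac (max (α - t) 0)
        + ENNReal.ofReal (min (α / t) 1) • Measure.dirac (t + max (α - t) 0) := by
  obtain ⟨ht0, ht1⟩ := ht
  obtain ⟨hα0, hα1⟩ := hα
  set a : ℝ := max (α - t) 0 with ha
  have ha0 : 0 ≤ a := le_max_right _ _
  -- the uniform part contributes a constant
  have hu : ∀ S : Set ℝ, MeasurableSet S → volume (S ∩ Set.Icc t 1) = ENNReal.ofReal (α - t) →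
      ENNReal.ofReal (1 - t) * unif t 1 S = ENNReal.ofReal a := by
    intro S hS hvol
    have hofr : ENNReal.ofReal (α - t) = ENNReal.ofReal a := by
      rcases le_total (α - t) 0 with h | h
      · rw [ENNReal.ofReal_eq_zero.mpr h, ha, max_eq_right h, ENNReal.ofReal_zero]
      · rw [ha, max_eq_left h]
    rcases lt_or_eq_of_le ht1 with h | h
    · rw [unif, if_pos h, Measure.smul_apply, Measure.restrict_apply hS, hvol, smul_eq_mul,
        ← mul_assoc, ENNReal.mul_inv_cancel ((ENNReal.ofReal_pos.mpr (by linarith)).ne') ENNReal.ofReal_ne_top,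
        one_mul, hofr]
    · rw [← h, sub_self, ENNReal.ofReal_zero, zero_mul, ← hofr,
        ENNReal.ofReal_eq_zero.mpr (by linarith)]
  have huIcc : ENNReal.ofReal (1 - t) * unif t 1 (Set.Icc 0 α) = ENNReal.ofReal a := by
    apply hu _ measurableSet_Icc
    have : Set.Icc 0 α ∩ Set.Icc t 1 = Set.Icc t α := by
      rw [Set.Icc_inter_Icc, max_eq_right ht0.le, min_eq_left hα1]
    rw [this, Real.volume_Icc]
  have huIco : ENNReal.ofReal (1 - t) * unif t 1 (Set.Ico 0 α) = ENNReal.ofReal a := by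
    apply hu _ measurableSet_Ico
    have : Set.Ico 0 α ∩ Set.Icc t 1 = Set.Ico t α := by
      ext x
      constructor
      · rintro ⟨⟨_, h2⟩, h3, _⟩; exact ⟨h3, h2⟩
      · rintro ⟨h1, h2⟩; exact ⟨⟨le_trans ht0.le h1, h2⟩, h1, le_trans h2.le hα1⟩
    rw [this, Real.volume_Ico]
  -- pointwise values
  have hval : ∀ x ∈ Set.Icc (0:ℝ) 1,
      (Kt t x (Set.Icc 0 α)).toReal = (if x ≤ α / t then t + a else a) := by
    intro x hx
    rw [Kt, Measure.add_apply, Measure.smul_apply, Measure.smul_apply, smul_eq_mul,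
      smul_eq_mul, huIcc, Measure.dirac_apply' _ measurableSet_Icc]
    by_cases h : x ≤ α / t
    · have hmem : x * t ∈ Set.Icc 0 α :=
        ⟨mul_nonneg hx.1 ht0.le, by rwa [← le_div_iff₀ ht0]⟩
      rw [Set.indicator_of_mem hmem, Pi.one_apply, mul_one, if_pos h,
        ← ENNReal.ofReal_add ht0.le ha0, ENNReal.toReal_ofReal (by linarith)]
    · have hmem : x * t ∉ Set.Icc 0 α := by
        intro hc
        exact h ((le_div_iff₀ ht0).mpr hc.2)
      rw [Set.indicator_of_notMem hmem, mul_zero, zero_add, if_neg h,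
        ENNReal.toReal_ofReal ha0]
  have hval' : ∀ x ∈ Set.Icc (0:ℝ) 1,
      (Kt t x (Set.Ico 0 α)).toReal = (if x < α / t then t + a else a) := by
    intro x hx
    rw [Kt, Measure.add_apply, Measure.smul_apply, Measure.smul_apply, smul_eq_mul,
      smul_eq_mul, huIco, Measure.dirac_apply' _ measurableSet_Ico]
    by_cases h : x < α / t
    · have hmem : x * t ∈ Set.Ico 0 α :=
        ⟨mul_nonneg hx.1 ht0.le, by rwa [← lt_div_iff₀ ht0]⟩
      rw [Set.indicator_of_mem hmem, Pi.one_apply, mul_one, if_pos h,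
        ← ENNReal.ofReal_add ht0.le ha0, ENNReal.toReal_ofReal (by linarith)]
    · have hmem : x * t ∉ Set.Ico 0 α := by
        intro hc
        exact h ((lt_div_iff₀ ht0).mpr hc.2)
      rw [Set.indicator_of_notMem hmem, mul_zero, zero_add, if_neg h,
        ENNReal.toReal_ofReal ha0]
  -- ae congruences
  have hae1 : (fun x => (Kt t x (Set.Icc 0 α)).toReal)
      =ᵐ[volume.restrict (Set.Icc (0:ℝ) 1)] (fun x => if x ≤ α / t then t + a else a) := by
    filter_upwards [ae_restrict_mem measurableSet_Icc] with x hx using hval x hx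
  have hne : ∀ᵐ x ∂(volume.restrict (Set.Icc (0:ℝ) 1)), x ≠ α / t := by
    rw [ae_iff]
    have hset : {x : ℝ | ¬ x ≠ α / t} = {α / t} := by ext x; simp
    rw [hset, Measure.restrict_apply (measurableSet_singleton _)]
    exact measure_mono_null Set.inter_subset_left Real.volume_singleton
  have hae2 : (fun x => (Kt t x (Set.Ico 0 α)).toReal)
      =ᵐ[volume.restrict (Set.Icc (0:ℝ) 1)] (fun x => if x ≤ α / t then t + a else a) := by
    filter_upwards [ae_restrict_mem measurableSet_Icc, hne] with x hx hxne
    rw [hval' x hx]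
    have hiff : x < α / t ↔ x ≤ α / t := ⟨le_of_lt, fun h => lt_of_le_of_ne h hxne⟩
    simp only [hiff]
  have hstep := map_step (α / t) (div_nonneg hα0 ht0.le) (t + a) a
  constructor
  · rw [Measure.map_congr hae1, Measure.map_congr hae2]
  · rw [Measure.map_congr hae1, hstep]
end
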